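/- Let A ∈ F^{d×μ'}, B, C ∈ F^{d×μ} with μ' ≤ μ, over a finite field F = F_{p^n}, with all entries chosen i.i.d. uniformly at random. Let M be the 2d×(μ'+2μ) block matrix [[A, B, 0],[A, 0, C]]. Then the probability that M has rank min{2d, μ'+2μ} tends to 1 as n → ∞. -/

import Mathlib

open Matrix Filter Function Finset

section helpers
variable {F : Type*} [Field F] [Fintype F]

lemma exists_mulVec_eq {n d : Type*} [Fintype n] [DecidableEq n] {x : n → F} (hx : x ≠ 0)
    (w : d → F) : ∃ A : Matrix d n F, A *ᵥ x = w := by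
  obtain ⟨j0, hj0⟩ : ∃ j, x j ≠ 0 := by
    by_contra h; push_neg at h; exact hx (funext fun j => h j)
  refine ⟨Matrix.of fun i j => if j = j0 then w i * (x j0)⁻¹ else 0, ?_⟩
  ext i
  simp only [Matrix.mulVec, dotProduct, Matrix.of_apply, ite_mul, zero_mul]
  rw [Finset.sum_ite_eq' Finset.univ j0 (fun j => w i * (x j0)⁻¹ * x j)]
  simp [hj0]

/-- matrix-to-vector mulVec as a linear map in the matrix -/
def mvL {n d : Type*} [Fintype n] (x : n → F) : Matrix d n F →ₗ[F] (d → F) where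
  toFun A := A *ᵥ x
  map_add' A B := Matrix.add_mulVec A B x
  map_smul' c A := by simp [Matrix.smul_mulVec]

@[simp] lemma mvL_apply {n d : Type*} [Fintype n] (x : n → F) (A : Matrix d n F) :
    mvL x A = A *ᵥ x := rfl

lemma card_ker_mul_card {Ω W : Type*} [AddCommGroup Ω] [Module F Ω] [AddCommGroup W]
    [Module F W] [Fintype Ω] [Fintype W] (f : Ω →ₗ[F] W) (hf : Surjective f) :
    Nat.card {ω : Ω // f ω = 0} * Fintype.card W = Fintype.card Ω := by
  have h1 : Nat.card {ω : Ω // f ω = 0} = Nat.card (LinearMap.ker f) :=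
    Nat.card_congr (Equiv.subtypeEquivRight fun x => (LinearMap.mem_ker).symm)
  have h2 := Submodule.card_eq_card_quotient_mul_card (LinearMap.ker f)
  have h3 : Nat.card (Ω ⧸ LinearMap.ker f) = Nat.card W :=
    Nat.card_congr (f.quotKerEquivOfSurjective hf).toEquiv
  rw [Nat.card_eq_fintype_card] at h2
  rw [Nat.card_eq_fintype_card (α := W)] at h3
  rw [h1, h2, h3]

attribute [local instance 2000] Classical.propDecidable

lemma count_le {Ω W : Type*} [AddCommGroup Ω] [Module F Ω] [AddCommGroup W]
    [Module F W] [Fintype Ω] [Fintype W] (cond : Ω → Prop)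
    (f : Ω →ₗ[F] W) (hf : Surjective f) (h : ∀ ω, cond ω → f ω = 0) :
    ((Finset.univ.filter cond).card : ℝ) ≤ (Fintype.card Ω : ℝ) / (Fintype.card W : ℝ) := by
  have hW : (0:ℝ) < (Fintype.card W : ℝ) := by exact_mod_cast Fintype.card_pos
  rw [le_div_iff₀ hW]
  have hsub : (Finset.univ.filter cond).card ≤ (Finset.univ.filter fun ω => f ω = 0).card :=
    Finset.card_le_card (Finset.monotone_filter_right _ fun a _ => h a)
  have hker : (Finset.univ.filter fun ω : Ω => f ω = 0).card * Fintype.card W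
      = Fintype.card Ω := by
    rw [← card_ker_mul_card f hf, Nat.card_eq_fintype_card, Fintype.card_subtype]
  calc ((Finset.univ.filter cond).card : ℝ) * (Fintype.card W : ℝ)
      ≤ ((Finset.univ.filter fun ω : Ω => f ω = 0).card : ℝ) * (Fintype.card W : ℝ) := by
        apply mul_le_mul_of_nonneg_right _ hW.le; exact_mod_cast hsub
    _ = (Fintype.card Ω : ℝ) := by exact_mod_cast congrArg (fun x : ℕ => (x:ℝ)) hker

lemma double_count {Ω V : Type*} [Fintype Ω] [Fintype V] [AddCommGroup V] [Module F V]
    (cond : Ω → V → Prop) (hsmul : ∀ ω (c : F) v, cond ω v → cond ω (c • v)) :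
    (Fintype.card F - 1) * (Finset.univ.filter fun ω : Ω => ∃ v : V, v ≠ 0 ∧ cond ω v).card
      ≤ ∑ v ∈ Finset.univ.filter fun v : V => v ≠ 0,
          (Finset.univ.filter fun ω : Ω => cond ω v).card := by
  have key : ∀ ω ∈ Finset.univ.filter (fun ω : Ω => ∃ v, v ≠ 0 ∧ cond ω v),
      Fintype.card F - 1 ≤ (Finset.univ.filter fun v : V => v ≠ 0 ∧ cond ω v).card := by
    intro ω hω
    obtain ⟨v, hv, hc⟩ := (Finset.mem_filter.mp hω).2
    have hinj : Set.InjOn (fun c : F => c • v) ((Finset.univ.erase (0:F)) : Finset F) :=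
      (smul_left_injective F hv).injOn
    have hmaps : ∀ c ∈ (Finset.univ.erase (0:F)),
        c • v ∈ Finset.univ.filter fun v' : V => v' ≠ 0 ∧ cond ω v' := fun c hc' =>
      Finset.mem_filter.mpr ⟨Finset.mem_univ _,
        ⟨smul_ne_zero (Finset.ne_of_mem_erase hc') hv, hsmul ω _ v hc⟩⟩
    have := Finset.card_le_card_of_injOn (fun c : F => c • v) hmaps hinj
    simpa [Finset.card_erase_of_mem] using this
  calc (Fintype.card F - 1) * (Finset.univ.filter fun ω : Ω => ∃ v, v ≠ 0 ∧ cond ω v).card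
      = ∑ _ω ∈ Finset.univ.filter fun ω : Ω => ∃ v, v ≠ 0 ∧ cond ω v, (Fintype.card F - 1) := by
        rw [Finset.sum_const, smul_eq_mul, mul_comm]
    _ ≤ ∑ ω ∈ Finset.univ.filter fun ω : Ω => ∃ v, v ≠ 0 ∧ cond ω v,
          (Finset.univ.filter fun v : V => v ≠ 0 ∧ cond ω v).card :=
        Finset.sum_le_sum key
    _ ≤ ∑ ω : Ω, (Finset.univ.filter fun v : V => v ≠ 0 ∧ cond ω v).card :=
        Finset.sum_le_sum_of_subset (Finset.filter_subset _ _)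
    _ = ∑ v : V, (Finset.univ.filter fun ω : Ω => v ≠ 0 ∧ cond ω v).card := by
        simp_rw [Finset.card_filter]
        exact Finset.sum_comm
    _ = ∑ v ∈ Finset.univ.filter fun v : V => v ≠ 0,
          (Finset.univ.filter fun ω : Ω => cond ω v).card := by
        rw [Finset.sum_filter]
        refine Finset.sum_congr rfl fun v _ => ?_
        by_cases hv : v = 0
        · simp [hv]
        · simp only [hv, if_true, ne_eq, not_false_iff]
          congr 1
          exact Finset.filter_congr fun ω _ => by simp [hv]

end helpers
open Matrix Filter Function Finset

section rankchar
variable {F : Type*} [Field F]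

lemma rank_char_col {m n : Type*} [Fintype m] [Fintype n] (M : Matrix m n F)
    (h : Fintype.card n ≤ Fintype.card m) :
    (M.rank = min (Fintype.card m) (Fintype.card n) ↔ ∀ v, M *ᵥ v = 0 → v = 0) := by
  rw [min_eq_right h]
  have hrn := LinearMap.finrank_range_add_finrank_ker M.mulVecLin
  rw [Module.finrank_pi] at hrn
  have h1 : M.rank = Fintype.card n ↔ Module.finrank F (LinearMap.ker M.mulVecLin) = 0 := by
    unfold Matrix.rank
    omega
  rw [h1, Submodule.finrank_eq_zero, Submodule.eq_bot_iff]
  constructor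
  · intro hk v hv; exact hk v (LinearMap.mem_ker.mpr (by simpa using hv))
  · intro hk v hv; exact hk v (by simpa using LinearMap.mem_ker.mp hv)

lemma rank_char_row {m n : Type*} [Fintype m] [Fintype n] (M : Matrix m n F)
    (h : Fintype.card m ≤ Fintype.card n) :
    (M.rank = min (Fintype.card m) (Fintype.card n) ↔ ∀ u, u ᵥ* M = 0 → u = 0) := by
  rw [← Matrix.rank_transpose, min_comm]
  rw [rank_char_col Mᵀ (by simpa using h)]
  simp_rw [Matrix.mulVec_transpose]

lemma exists_vecMul_eq' {F : Type*} [Field F] [Fintype F] {m n : Type*} [Fintype m] [DecidableEq m]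
    {u : m → F} (hu : u ≠ 0) (w : n → F) : ∃ A : Matrix m n F, u ᵥ* A = w := by
  classical
  obtain ⟨B, hB⟩ := exists_mulVec_eq (d := n) hu w
  exact ⟨Bᵀ, by rwa [Matrix.vecMul_transpose]⟩

/-- vecMul as a linear map in the matrix -/
def vmL {F : Type*} [Field F] {m n : Type*} [Fintype m] (u : m → F) :
    Matrix m n F →ₗ[F] (n → F) where
  toFun A := u ᵥ* A
  map_add' A B := by simp [Matrix.vecMul_add]
  map_smul' c A := by
    ext j
    simp [Matrix.vecMul, dotProduct, Finset.mul_sum, mul_left_comm]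

@[simp] lemma vmL_apply {F : Type*} [Field F] {m n : Type*} [Fintype m] (u : m → F)
    (A : Matrix m n F) : vmL u A = u ᵥ* A := rfl

end rankchar
section core
open Matrix Function Finset
variable {F : Type*} [Field F] [Fintype F] {d μ' μ : ℕ}


/-- sample space -/
abbrev Om (F : Type*) (d μ' μ : ℕ) : Type _ :=
  Matrix (Fin d) (Fin μ') F × Matrix (Fin d) (Fin μ) F × Matrix (Fin d) (Fin μ) F

/-- the block matrix -/
def Mat (ω : Matrix (Fin d) (Fin μ') F × Matrix (Fin d) (Fin μ) F × Matrix (Fin d) (Fin μ) F) :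
    Matrix (Fin d ⊕ Fin d) ((Fin μ' ⊕ Fin μ) ⊕ Fin μ) F :=
  Matrix.fromBlocks (Matrix.fromCols ω.1 ω.2.1) 0 (Matrix.fromCols ω.1 0) ω.2.2

lemma arith_col1 {d μ' μ : ℕ} (hK : μ' + 2*μ ≤ 2*d) : μ ≤ d := by omega
lemma arith_col2 {d μ' μ : ℕ} (hμ : μ' ≤ μ) (hK : μ' + 2*μ ≤ 2*d) : μ' ≤ d := by omega
lemma arith_row1 {d μ' μ : ℕ} (hμ : μ' ≤ μ) (hK : 2*d ≤ μ' + 2*μ) : d ≤ 2*μ := by omega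
lemma arith_row2 {d μ' μ : ℕ} (hK : 2*d ≤ μ' + 2*μ) : d ≤ μ' + μ := by omega

lemma sum_elim_eq_zero_iff {α β γ : Type*} [Zero γ] (f : α → γ) (g : β → γ) :
    Sum.elim f g = 0 ↔ f = 0 ∧ g = 0 := by
  constructor
  · intro h
    exact ⟨funext fun a => congrFun h (Sum.inl a), funext fun b => congrFun h (Sum.inr b)⟩
  · rintro ⟨h1, h2⟩
    subst h1; subst h2
    funext x; cases x <;> simp

lemma mat_mulVec_eq_zero_iff (ω : Om F d μ' μ) (v : ((Fin μ' ⊕ Fin μ) ⊕ Fin μ) → F) :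
    Mat ω *ᵥ v = 0 ↔
      (ω.1 *ᵥ (v ∘ Sum.inl ∘ Sum.inl) + ω.2.1 *ᵥ (v ∘ Sum.inl ∘ Sum.inr) = 0 ∧
       ω.1 *ᵥ (v ∘ Sum.inl ∘ Sum.inl) + ω.2.2 *ᵥ (v ∘ Sum.inr) = 0) := by
  have hv : v ∘ Sum.inl = Sum.elim (v ∘ Sum.inl ∘ Sum.inl) (v ∘ Sum.inl ∘ Sum.inr) := by
    funext x; cases x <;> rfl
  rw [Mat, Matrix.fromBlocks_mulVec, hv, Matrix.fromCols_mulVec_sumElim,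
    Matrix.fromCols_mulVec_sumElim, Matrix.zero_mulVec, Matrix.zero_mulVec,
    add_zero, add_zero, sum_elim_eq_zero_iff]

lemma mat_vecMul_eq_zero_iff (ω : Om F d μ' μ) (u : (Fin d ⊕ Fin d) → F) :
    u ᵥ* Mat ω = 0 ↔
      (((u ∘ Sum.inl) + (u ∘ Sum.inr)) ᵥ* ω.1 = 0 ∧
       (u ∘ Sum.inl) ᵥ* ω.2.1 = 0 ∧ (u ∘ Sum.inr) ᵥ* ω.2.2 = 0) := by
  rw [Mat, Matrix.vecMul_fromBlocks, Matrix.vecMul_fromCols, Matrix.vecMul_fromCols,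
    sum_elim_eq_zero_iff]
  have h1 : Sum.elim ((u ∘ Sum.inl) ᵥ* ω.1) ((u ∘ Sum.inl) ᵥ* ω.2.1)
      + Sum.elim ((u ∘ Sum.inr) ᵥ* ω.1) ((u ∘ Sum.inr) ᵥ* (0 : Matrix (Fin d) (Fin μ) F))
      = Sum.elim ((u ∘ Sum.inl) ᵥ* ω.1 + (u ∘ Sum.inr) ᵥ* ω.1)
          ((u ∘ Sum.inl) ᵥ* ω.2.1 + (u ∘ Sum.inr) ᵥ* (0 : Matrix (Fin d) (Fin μ) F)) := by
    funext x; cases x <;> simp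
  rw [h1, sum_elim_eq_zero_iff, Matrix.vecMul_zero, add_zero, Matrix.vecMul_zero, zero_add,
    Matrix.add_vecMul]
  tauto

end core
section colcase
open Matrix Function Finset
variable {F : Type*} [Field F] [Fintype F] {d μ' μ : ℕ}

attribute [local instance 2000] Classical.propDecidable

lemma card_fun_fin (k : ℕ) : (Fintype.card (Fin k → F) : ℝ) = (Fintype.card F : ℝ) ^ k := by
  simp [Fintype.card_fun]

lemma card_prod_fun_fin (k l : ℕ) :
    (Fintype.card ((Fin k → F) × (Fin l → F)) : ℝ) = (Fintype.card F : ℝ) ^ (k + l) := by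
  simp [Fintype.card_fun, pow_add]

lemma TdivPos (k : ℕ) : (0:ℝ) ≤ (Fintype.card (Om F d μ' μ) : ℝ) / (Fintype.card F : ℝ) ^ k := by
  positivity

set_option maxHeartbeats 1000000 in
lemma colN (v : ((Fin μ' ⊕ Fin μ) ⊕ Fin μ) → F) (hv : v ≠ 0) :
    ((Finset.univ.filter fun ω : Om F d μ' μ => Mat ω *ᵥ v = 0).card : ℝ) ≤
      (Fintype.card (Om F d μ' μ) : ℝ) / (Fintype.card F : ℝ) ^ (2*d)
      + (if v ∘ Sum.inl ∘ Sum.inl = 0 ∧ v ∘ Sum.inr = 0 then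
          (Fintype.card (Om F d μ' μ) : ℝ) / (Fintype.card F : ℝ) ^ d else 0)
      + (if v ∘ Sum.inl ∘ Sum.inl = 0 ∧ v ∘ Sum.inl ∘ Sum.inr = 0 then
          (Fintype.card (Om F d μ' μ) : ℝ) / (Fintype.card F : ℝ) ^ d else 0)
      + (if v ∘ Sum.inl ∘ Sum.inr = 0 ∧ v ∘ Sum.inr = 0 then
          (Fintype.card (Om F d μ' μ) : ℝ) / (Fintype.card F : ℝ) ^ d else 0) := by
  have h2d := TdivPos (F := F) (d := d) (μ' := μ') (μ := μ) (2*d)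
  have hd := TdivPos (F := F) (d := d) (μ' := μ') (μ := μ) d
  set x := v ∘ Sum.inl ∘ Sum.inl with hxdef
  set y := v ∘ Sum.inl ∘ Sum.inr with hydef
  set z := v ∘ Sum.inr with hzdef
  have hcond : ∀ ω : Om F d μ' μ, (Mat ω *ᵥ v = 0) ↔
      (ω.1 *ᵥ x + ω.2.1 *ᵥ y = 0 ∧ ω.1 *ᵥ x + ω.2.2 *ᵥ z = 0) :=
    fun ω => mat_mulVec_eq_zero_iff ω v
  by_cases hxz : x = 0 ∧ z = 0
  · -- only y can be nonzero
    have hy : y ≠ 0 := by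
      intro hy0
      apply hv
      funext i
      rcases i with (i | i) | i
      · exact congrFun hxz.1 i
      · exact congrFun hy0 i
      · exact congrFun hxz.2 i
    have hb := count_le (F := F) (fun ω : Om F d μ' μ => Mat ω *ᵥ v = 0)
      ((mvL y).comp ((LinearMap.fst F (Matrix (Fin d) (Fin μ) F)
          (Matrix (Fin d) (Fin μ) F)).comp
        (LinearMap.snd F (Matrix (Fin d) (Fin μ') F) _)))
      (fun w => by
        obtain ⟨B, hB⟩ := exists_mulVec_eq hy w
        exact ⟨(0, B, 0), hB⟩)
      (fun ω hc => by
        have h1 := ((hcond ω).mp hc).1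
        rw [hxz.1, Matrix.mulVec_zero, zero_add] at h1
        simpa using h1)
    rw [card_fun_fin] at hb
    rw [if_pos hxz]
    have hr1 : (0:ℝ) ≤ (if x = 0 ∧ y = 0 then
        (Fintype.card (Om F d μ' μ) : ℝ) / (Fintype.card F : ℝ) ^ d else 0) := by positivity
    have hr2 : (0:ℝ) ≤ (if y = 0 ∧ z = 0 then
        (Fintype.card (Om F d μ' μ) : ℝ) / (Fintype.card F : ℝ) ^ d else 0) := by positivity
    linarith
  · by_cases hxy : x = 0 ∧ y = 0
    · have hz : z ≠ 0 := fun hz0 => hxz ⟨hxy.1, hz0⟩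
      have hb := count_le (F := F) (fun ω : Om F d μ' μ => Mat ω *ᵥ v = 0)
        ((mvL z).comp ((LinearMap.snd F (Matrix (Fin d) (Fin μ) F)
            (Matrix (Fin d) (Fin μ) F)).comp
          (LinearMap.snd F (Matrix (Fin d) (Fin μ') F) _)))
        (fun w => by
          obtain ⟨C, hC⟩ := exists_mulVec_eq hz w
          exact ⟨(0, 0, C), hC⟩)
        (fun ω hc => by
          have h1 := ((hcond ω).mp hc).2
          rw [hxy.1, Matrix.mulVec_zero, zero_add] at h1
          simpa using h1)
      rw [card_fun_fin] at hb
      rw [if_pos hxy]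
      have hr1 : (0:ℝ) ≤ (if x = 0 ∧ z = 0 then
          (Fintype.card (Om F d μ' μ) : ℝ) / (Fintype.card F : ℝ) ^ d else 0) := by positivity
      have hr2 : (0:ℝ) ≤ (if y = 0 ∧ z = 0 then
          (Fintype.card (Om F d μ' μ) : ℝ) / (Fintype.card F : ℝ) ^ d else 0) := by positivity
      linarith
    · by_cases hyz : y = 0 ∧ z = 0
      · have hx : x ≠ 0 := fun hx0 => hxy ⟨hx0, hyz.1⟩
        have hb := count_le (F := F) (fun ω : Om F d μ' μ => Mat ω *ᵥ v = 0)
          ((mvL x).comp (LinearMap.fst F (Matrix (Fin d) (Fin μ') F) _))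
          (fun w => by
            obtain ⟨A, hA⟩ := exists_mulVec_eq hx w
            exact ⟨(A, 0, 0), hA⟩)
          (fun ω hc => by
            have h1 := ((hcond ω).mp hc).1
            rw [hyz.1, Matrix.mulVec_zero, add_zero] at h1
            simpa using h1)
        rw [card_fun_fin] at hb
        rw [if_pos hyz]
        have hr1 : (0:ℝ) ≤ (if x = 0 ∧ z = 0 then
            (Fintype.card (Om F d μ' μ) : ℝ) / (Fintype.card F : ℝ) ^ d else 0) := by positivity
        have hr2 : (0:ℝ) ≤ (if x = 0 ∧ y = 0 then
            (Fintype.card (Om F d μ' μ) : ℝ) / (Fintype.card F : ℝ) ^ d else 0) := by positivity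
        linarith
      · -- at least two of x, y, z nonzero
        have hb := count_le (F := F) (fun ω : Om F d μ' μ => Mat ω *ᵥ v = 0)
          (LinearMap.prod
            ((mvL x).comp (LinearMap.fst F (Matrix (Fin d) (Fin μ') F) _) +
             (mvL y).comp ((LinearMap.fst F (Matrix (Fin d) (Fin μ) F)
                (Matrix (Fin d) (Fin μ) F)).comp
               (LinearMap.snd F (Matrix (Fin d) (Fin μ') F) _)))
            ((mvL x).comp (LinearMap.fst F (Matrix (Fin d) (Fin μ') F) _) +
             (mvL z).comp ((LinearMap.snd F (Matrix (Fin d) (Fin μ) F)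
                (Matrix (Fin d) (Fin μ) F)).comp
               (LinearMap.snd F (Matrix (Fin d) (Fin μ') F) _))))
          (by
            rintro ⟨u, w⟩
            by_cases hx : x = 0
            · have hz : z ≠ 0 := fun hz0 => hxz ⟨hx, hz0⟩
              have hy : y ≠ 0 := fun hy0 => hxy ⟨hx, hy0⟩
              obtain ⟨B, hB⟩ := exists_mulVec_eq hy u
              obtain ⟨C, hC⟩ := exists_mulVec_eq hz w
              refine ⟨(0, B, C), ?_⟩
              simp [LinearMap.prod_apply, hB, hC, Matrix.zero_mulVec, Prod.ext_iff]
            · by_cases hy : y = 0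
              · have hz : z ≠ 0 := fun hz0 => hyz ⟨hy, hz0⟩
                obtain ⟨A, hA⟩ := exists_mulVec_eq hx u
                obtain ⟨C, hC⟩ := exists_mulVec_eq hz (w - u)
                refine ⟨(A, 0, C), ?_⟩
                simp [LinearMap.prod_apply, hA, hC, hy, Matrix.mulVec_zero,
                  Matrix.zero_mulVec, Prod.ext_iff]
              · obtain ⟨A, hA⟩ := exists_mulVec_eq hx w
                obtain ⟨B, hB⟩ := exists_mulVec_eq hy (u - w)
                refine ⟨(A, B, 0), ?_⟩
                simp [LinearMap.prod_apply, hA, hB, Matrix.zero_mulVec, Prod.ext_iff]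
          )
          (fun ω hc => by
            have h1 := (hcond ω).mp hc
            simp [LinearMap.prod_apply, Prod.ext_iff, h1.1, h1.2])
        rw [card_prod_fun_fin] at hb
        have hdd : d + d = 2 * d := by ring
        rw [hdd] at hb
        have hr1 : (0:ℝ) ≤ (if x = 0 ∧ z = 0 then
            (Fintype.card (Om F d μ' μ) : ℝ) / (Fintype.card F : ℝ) ^ d else 0) := by positivity
        have hr2 : (0:ℝ) ≤ (if x = 0 ∧ y = 0 then
            (Fintype.card (Om F d μ' μ) : ℝ) / (Fintype.card F : ℝ) ^ d else 0) := by positivity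
        have hr3 : (0:ℝ) ≤ (if y = 0 ∧ z = 0 then
            (Fintype.card (Om F d μ' μ) : ℝ) / (Fintype.card F : ℝ) ^ d else 0) := by positivity
        linarith

end colcase
section colsum
open Matrix Function Finset
variable {F : Type*} [Field F] [Fintype F] {d μ' μ : ℕ}

attribute [local instance 2000] Classical.propDecidable

lemma cardV_col (d μ' μ : ℕ) (F : Type*) [Field F] [Fintype F] :
    Fintype.card (((Fin μ' ⊕ Fin μ) ⊕ Fin μ) → F) = Fintype.card F ^ (μ' + 2*μ) := by
  rw [Fintype.card_fun]
  congr 1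
  simp only [Fintype.card_sum, Fintype.card_fin]
  ring

lemma cardV_row (d : ℕ) (F : Type*) [Field F] [Fintype F] :
    Fintype.card ((Fin d ⊕ Fin d) → F) = Fintype.card F ^ (2*d) := by
  rw [Fintype.card_fun]
  congr 1
  simp only [Fintype.card_sum, Fintype.card_fin]
  ring


lemma card_filter_le_of_inj {α β : Type*} [Fintype α] [Fintype β] (P : α → Prop) (f : α → β)
    (hf : ∀ a b, P a → P b → f a = f b → a = b) :
    (Finset.univ.filter P).card ≤ Fintype.card β := by
  rw [← Finset.card_univ (α := β)]
  exact Finset.card_le_card_of_injOn f (fun a _ => Finset.mem_univ _)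
    (fun a ha b hb h => hf a b (by simpa using ha) (by simpa using hb) h)

lemma pow_mul_div_le {q T : ℝ} (hq : 1 ≤ q) (hT : 0 ≤ T) {a b : ℕ} (h : a ≤ b) :
    q ^ a * (T / q ^ b) ≤ T := by
  have hqb : (0:ℝ) < q ^ b := by positivity
  calc q ^ a * (T / q ^ b) ≤ q ^ b * (T / q ^ b) :=
        mul_le_mul_of_nonneg_right (pow_le_pow_right₀ hq h) (by positivity)
    _ = T := by rw [mul_comm]; exact div_mul_cancel₀ T hqb.ne'

lemma ite_sum_le {V : Type*} [Fintype V] (P : V → Prop) (c : ℝ) (hc : 0 ≤ c) (S : Finset V) :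
    ∑ v ∈ S, (if P v then c else 0) ≤ ((Finset.univ.filter P).card : ℝ) * c := by
  calc ∑ v ∈ S, (if P v then c else 0) ≤ ∑ v : V, (if P v then c else 0) :=
        Finset.sum_le_sum_of_subset_of_nonneg (Finset.subset_univ S)
          (fun v _ _ => by split <;> simp [hc])
    _ = ((Finset.univ.filter P).card : ℝ) * c := by
        rw [Finset.sum_ite, Finset.sum_const, Finset.sum_const_zero, add_zero, nsmul_eq_mul]

lemma col_sum_bound (hμ : μ' ≤ μ) (hK : μ' + 2*μ ≤ 2*d) :
    ∑ v ∈ Finset.univ.filter (fun v : ((Fin μ' ⊕ Fin μ) ⊕ Fin μ) → F => v ≠ 0),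
      ((Finset.univ.filter fun ω : Om F d μ' μ => Mat ω *ᵥ v = 0).card : ℝ)
    ≤ 4 * (Fintype.card (Om F d μ' μ) : ℝ) := by
  set q : ℝ := (Fintype.card F : ℝ) with hqdef
  set T : ℝ := (Fintype.card (Om F d μ' μ) : ℝ) with hTdef
  have hq : (1:ℝ) ≤ q := by
    rw [hqdef]; exact_mod_cast Fintype.card_pos
  have hT : (0:ℝ) ≤ T := by rw [hTdef]; positivity
  have step1 : ∑ v ∈ Finset.univ.filter (fun v : ((Fin μ' ⊕ Fin μ) ⊕ Fin μ) → F => v ≠ 0),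
      ((Finset.univ.filter fun ω : Om F d μ' μ => Mat ω *ᵥ v = 0).card : ℝ)
      ≤ ∑ v ∈ Finset.univ.filter (fun v : ((Fin μ' ⊕ Fin μ) ⊕ Fin μ) → F => v ≠ 0),
        (T / q ^ (2*d)
         + (if v ∘ Sum.inl ∘ Sum.inl = 0 ∧ v ∘ Sum.inr = 0 then T / q ^ d else 0)
         + (if v ∘ Sum.inl ∘ Sum.inl = 0 ∧ v ∘ Sum.inl ∘ Sum.inr = 0 then T / q ^ d else 0)
         + (if v ∘ Sum.inl ∘ Sum.inr = 0 ∧ v ∘ Sum.inr = 0 then T / q ^ d else 0)) :=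
    Finset.sum_le_sum fun v hv => colN v (Finset.mem_filter.mp hv).2
  refine le_trans step1 ?_
  have e1 : ∑ v ∈ Finset.univ.filter (fun v : ((Fin μ' ⊕ Fin μ) ⊕ Fin μ) → F => v ≠ 0),
      (T / q ^ (2*d)) ≤ T := by
    rw [Finset.sum_const, nsmul_eq_mul]
    calc ((Finset.univ.filter (fun v : ((Fin μ' ⊕ Fin μ) ⊕ Fin μ) → F => v ≠ 0)).card : ℝ)
          * (T / q ^ (2*d))
        ≤ (Fintype.card (((Fin μ' ⊕ Fin μ) ⊕ Fin μ) → F) : ℝ) * (T / q ^ (2*d)) := by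
          apply mul_le_mul_of_nonneg_right _ (by positivity)
          exact_mod_cast Finset.card_filter_le _ _
      _ = q ^ (μ' + 2*μ) * (T / q ^ (2*d)) := by
          congr 1
          rw [hqdef]
          exact_mod_cast cardV_col d μ' μ F
      _ ≤ T := pow_mul_div_le hq hT hK
  have e2 : ∑ v ∈ Finset.univ.filter (fun v : ((Fin μ' ⊕ Fin μ) ⊕ Fin μ) → F => v ≠ 0),
      (if v ∘ Sum.inl ∘ Sum.inl = 0 ∧ v ∘ Sum.inr = 0 then T / q ^ d else 0) ≤ T := by
    refine le_trans (ite_sum_le _ _ (by positivity) _) ?_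
    have hcard := card_filter_le_of_inj
      (fun v : ((Fin μ' ⊕ Fin μ) ⊕ Fin μ) → F => v ∘ Sum.inl ∘ Sum.inl = 0 ∧ v ∘ Sum.inr = 0)
      (fun v => v ∘ Sum.inl ∘ Sum.inr) (β := Fin μ → F)
      (fun a b ha hb h => by
        funext i
        rcases i with (i | i) | i
        · exact (congrFun ha.1 i).trans (congrFun hb.1 i).symm
        · exact congrFun h i
        · exact (congrFun ha.2 i).trans (congrFun hb.2 i).symm)
    calc ((Finset.univ.filter (fun v : ((Fin μ' ⊕ Fin μ) ⊕ Fin μ) → F =>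
            v ∘ Sum.inl ∘ Sum.inl = 0 ∧ v ∘ Sum.inr = 0)).card : ℝ) * (T / q ^ d)
        ≤ (Fintype.card (Fin μ → F) : ℝ) * (T / q ^ d) := by
          apply mul_le_mul_of_nonneg_right _ (by positivity)
          exact_mod_cast hcard
      _ = q ^ μ * (T / q ^ d) := by rw [hqdef]; rw [Fintype.card_fun]; push_cast; simp
      _ ≤ T := pow_mul_div_le hq hT (arith_col1 hK)
  have e3 : ∑ v ∈ Finset.univ.filter (fun v : ((Fin μ' ⊕ Fin μ) ⊕ Fin μ) → F => v ≠ 0),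
      (if v ∘ Sum.inl ∘ Sum.inl = 0 ∧ v ∘ Sum.inl ∘ Sum.inr = 0 then T / q ^ d else 0) ≤ T := by
    refine le_trans (ite_sum_le _ _ (by positivity) _) ?_
    have hcard := card_filter_le_of_inj
      (fun v : ((Fin μ' ⊕ Fin μ) ⊕ Fin μ) → F =>
        v ∘ Sum.inl ∘ Sum.inl = 0 ∧ v ∘ Sum.inl ∘ Sum.inr = 0)
      (fun v => v ∘ Sum.inr) (β := Fin μ → F)
      (fun a b ha hb h => by
        funext i
        rcases i with (i | i) | i
        · exact (congrFun ha.1 i).trans (congrFun hb.1 i).symm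
        · exact (congrFun ha.2 i).trans (congrFun hb.2 i).symm
        · exact congrFun h i)
    calc ((Finset.univ.filter (fun v : ((Fin μ' ⊕ Fin μ) ⊕ Fin μ) → F =>
            v ∘ Sum.inl ∘ Sum.inl = 0 ∧ v ∘ Sum.inl ∘ Sum.inr = 0)).card : ℝ) * (T / q ^ d)
        ≤ (Fintype.card (Fin μ → F) : ℝ) * (T / q ^ d) := by
          apply mul_le_mul_of_nonneg_right _ (by positivity)
          exact_mod_cast hcard
      _ = q ^ μ * (T / q ^ d) := by rw [hqdef]; rw [Fintype.card_fun]; push_cast; simp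
      _ ≤ T := pow_mul_div_le hq hT (arith_col1 hK)
  have e4 : ∑ v ∈ Finset.univ.filter (fun v : ((Fin μ' ⊕ Fin μ) ⊕ Fin μ) → F => v ≠ 0),
      (if v ∘ Sum.inl ∘ Sum.inr = 0 ∧ v ∘ Sum.inr = 0 then T / q ^ d else 0) ≤ T := by
    refine le_trans (ite_sum_le _ _ (by positivity) _) ?_
    have hcard := card_filter_le_of_inj
      (fun v : ((Fin μ' ⊕ Fin μ) ⊕ Fin μ) → F =>
        v ∘ Sum.inl ∘ Sum.inr = 0 ∧ v ∘ Sum.inr = 0)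
      (fun v => v ∘ Sum.inl ∘ Sum.inl) (β := Fin μ' → F)
      (fun a b ha hb h => by
        funext i
        rcases i with (i | i) | i
        · exact congrFun h i
        · exact (congrFun ha.1 i).trans (congrFun hb.1 i).symm
        · exact (congrFun ha.2 i).trans (congrFun hb.2 i).symm)
    calc ((Finset.univ.filter (fun v : ((Fin μ' ⊕ Fin μ) ⊕ Fin μ) → F =>
            v ∘ Sum.inl ∘ Sum.inr = 0 ∧ v ∘ Sum.inr = 0)).card : ℝ) * (T / q ^ d)
        ≤ (Fintype.card (Fin μ' → F) : ℝ) * (T / q ^ d) := by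
          apply mul_le_mul_of_nonneg_right _ (by positivity)
          exact_mod_cast hcard
      _ = q ^ μ' * (T / q ^ d) := by rw [hqdef]; rw [Fintype.card_fun]; push_cast; simp
      _ ≤ T := pow_mul_div_le hq hT (arith_col2 hμ hK)
  simp only [Finset.sum_add_distrib]
  linarith

end colsum
section rowcase
open Matrix Function Finset
variable {F : Type*} [Field F] [Fintype F] {d μ' μ : ℕ}

attribute [local instance 2000] Classical.propDecidable

lemma card_prod3_fun_fin (a b c : ℕ) :
    (Fintype.card ((Fin a → F) × ((Fin b → F) × (Fin c → F))) : ℝ)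
      = (Fintype.card F : ℝ) ^ (a + b + c) := by
  simp [Fintype.card_fun, pow_add, mul_assoc]

lemma rowN (u : (Fin d ⊕ Fin d) → F) (hu : u ≠ 0) :
    ((Finset.univ.filter fun ω : Om F d μ' μ => u ᵥ* Mat ω = 0).card : ℝ) ≤
      (Fintype.card (Om F d μ' μ) : ℝ) / (Fintype.card F : ℝ) ^ (μ' + 2*μ)
      + (if u ∘ Sum.inl + u ∘ Sum.inr = 0 then
          (Fintype.card (Om F d μ' μ) : ℝ) / (Fintype.card F : ℝ) ^ (2*μ) else 0)
      + (if u ∘ Sum.inr = 0 then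
          (Fintype.card (Om F d μ' μ) : ℝ) / (Fintype.card F : ℝ) ^ (μ' + μ) else 0)
      + (if u ∘ Sum.inl = 0 then
          (Fintype.card (Om F d μ' μ) : ℝ) / (Fintype.card F : ℝ) ^ (μ' + μ) else 0) := by
  have hK2 := TdivPos (F := F) (d := d) (μ' := μ') (μ := μ) (μ' + 2*μ)
  have h2μ := TdivPos (F := F) (d := d) (μ' := μ') (μ := μ) (2*μ)
  have hμμ := TdivPos (F := F) (d := d) (μ' := μ') (μ := μ) (μ' + μ)
  set lam := u ∘ Sum.inl with hlamdef
  set nu := u ∘ Sum.inr with hnudef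
  have hcond : ∀ ω : Om F d μ' μ, (u ᵥ* Mat ω = 0) ↔
      ((lam + nu) ᵥ* ω.1 = 0 ∧ lam ᵥ* ω.2.1 = 0 ∧ nu ᵥ* ω.2.2 = 0) :=
    fun ω => mat_vecMul_eq_zero_iff ω u
  have hne : ¬(lam = 0 ∧ nu = 0) := by
    rintro ⟨h1, h2⟩
    apply hu
    funext i
    rcases i with i | i
    · exact congrFun h1 i
    · exact congrFun h2 i
  by_cases hν : nu = 0
  · have hlm : lam ≠ 0 := fun h => hne ⟨h, hν⟩
    have hs : lam + nu ≠ 0 := by rw [hν, add_zero]; exact hlm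
    have hb := count_le (F := F) (fun ω : Om F d μ' μ => u ᵥ* Mat ω = 0)
      (LinearMap.prod
        ((vmL (lam + nu)).comp (LinearMap.fst F (Matrix (Fin d) (Fin μ') F) _))
        ((vmL lam).comp ((LinearMap.fst F (Matrix (Fin d) (Fin μ) F)
            (Matrix (Fin d) (Fin μ) F)).comp
          (LinearMap.snd F (Matrix (Fin d) (Fin μ') F) _))))
      (by
        rintro ⟨w1, w2⟩
        obtain ⟨A, hA⟩ := exists_vecMul_eq' hs w1
        obtain ⟨B, hB⟩ := exists_vecMul_eq' hlm w2
        exact ⟨(A, B, 0), by simp [LinearMap.prod_apply, hA, hB, Prod.ext_iff]⟩)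
      (fun ω hc => by
        have h1 := (hcond ω).mp hc
        simp [LinearMap.prod_apply, Prod.ext_iff, h1.1, h1.2.1])
    rw [card_prod_fun_fin] at hb
    rw [if_pos hν]
    have hr1 : (0:ℝ) ≤ (if lam + nu = 0 then
        (Fintype.card (Om F d μ' μ) : ℝ) / (Fintype.card F : ℝ) ^ (2*μ) else 0) := by positivity
    have hr2 : (0:ℝ) ≤ (if lam = 0 then
        (Fintype.card (Om F d μ' μ) : ℝ) / (Fintype.card F : ℝ) ^ (μ' + μ) else 0) := by
      positivity
    linarith
  · by_cases hlm : lam = 0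
    · have hs : lam + nu ≠ 0 := by rw [hlm, zero_add]; exact hν
      have hb := count_le (F := F) (fun ω : Om F d μ' μ => u ᵥ* Mat ω = 0)
        (LinearMap.prod
          ((vmL (lam + nu)).comp (LinearMap.fst F (Matrix (Fin d) (Fin μ') F) _))
          ((vmL nu).comp ((LinearMap.snd F (Matrix (Fin d) (Fin μ) F)
              (Matrix (Fin d) (Fin μ) F)).comp
            (LinearMap.snd F (Matrix (Fin d) (Fin μ') F) _))))
        (by
          rintro ⟨w1, w2⟩
          obtain ⟨A, hA⟩ := exists_vecMul_eq' hs w1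
          obtain ⟨C, hC⟩ := exists_vecMul_eq' hν w2
          exact ⟨(A, 0, C), by simp [LinearMap.prod_apply, hA, hC, Prod.ext_iff]⟩)
        (fun ω hc => by
          have h1 := (hcond ω).mp hc
          simp [LinearMap.prod_apply, Prod.ext_iff, h1.1, h1.2.2])
      rw [card_prod_fun_fin] at hb
      rw [if_pos hlm]
      have hr1 : (0:ℝ) ≤ (if lam + nu = 0 then
          (Fintype.card (Om F d μ' μ) : ℝ) / (Fintype.card F : ℝ) ^ (2*μ) else 0) := by
        positivity
      have hr2 : (0:ℝ) ≤ (if nu = 0 then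
          (Fintype.card (Om F d μ' μ) : ℝ) / (Fintype.card F : ℝ) ^ (μ' + μ) else 0) := by
        positivity
      linarith
    · by_cases hs : lam + nu = 0
      · have hb := count_le (F := F) (fun ω : Om F d μ' μ => u ᵥ* Mat ω = 0)
          (LinearMap.prod
            ((vmL lam).comp ((LinearMap.fst F (Matrix (Fin d) (Fin μ) F)
                (Matrix (Fin d) (Fin μ) F)).comp
              (LinearMap.snd F (Matrix (Fin d) (Fin μ') F) _)))
            ((vmL nu).comp ((LinearMap.snd F (Matrix (Fin d) (Fin μ) F)
                (Matrix (Fin d) (Fin μ) F)).comp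
              (LinearMap.snd F (Matrix (Fin d) (Fin μ') F) _))))
          (by
            rintro ⟨w1, w2⟩
            obtain ⟨B, hB⟩ := exists_vecMul_eq' hlm w1
            obtain ⟨C, hC⟩ := exists_vecMul_eq' hν w2
            exact ⟨(0, B, C), by simp [LinearMap.prod_apply, hB, hC, Prod.ext_iff]⟩)
          (fun ω hc => by
            have h1 := (hcond ω).mp hc
            simp [LinearMap.prod_apply, Prod.ext_iff, h1.2.1, h1.2.2])
        rw [card_prod_fun_fin] at hb
        have hμμ2 : μ + μ = 2*μ := by ring
        rw [hμμ2] at hb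
        rw [if_pos hs]
        have hr1 : (0:ℝ) ≤ (if nu = 0 then
            (Fintype.card (Om F d μ' μ) : ℝ) / (Fintype.card F : ℝ) ^ (μ' + μ) else 0) := by
          positivity
        have hr2 : (0:ℝ) ≤ (if lam = 0 then
            (Fintype.card (Om F d μ' μ) : ℝ) / (Fintype.card F : ℝ) ^ (μ' + μ) else 0) := by
          positivity
        linarith
      · have hb := count_le (F := F) (fun ω : Om F d μ' μ => u ᵥ* Mat ω = 0)
          (LinearMap.prod
            ((vmL (lam + nu)).comp (LinearMap.fst F (Matrix (Fin d) (Fin μ') F) _))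
            (LinearMap.prod
              ((vmL lam).comp ((LinearMap.fst F (Matrix (Fin d) (Fin μ) F)
                  (Matrix (Fin d) (Fin μ) F)).comp
                (LinearMap.snd F (Matrix (Fin d) (Fin μ') F) _)))
              ((vmL nu).comp ((LinearMap.snd F (Matrix (Fin d) (Fin μ) F)
                  (Matrix (Fin d) (Fin μ) F)).comp
                (LinearMap.snd F (Matrix (Fin d) (Fin μ') F) _)))))
          (by
            rintro ⟨w1, w2, w3⟩
            obtain ⟨A, hA⟩ := exists_vecMul_eq' hs w1
            obtain ⟨B, hB⟩ := exists_vecMul_eq' hlm w2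
            obtain ⟨C, hC⟩ := exists_vecMul_eq' hν w3
            exact ⟨(A, B, C), by simp [LinearMap.prod_apply, hA, hB, hC, Prod.ext_iff]⟩)
          (fun ω hc => by
            have h1 := (hcond ω).mp hc
            simp [LinearMap.prod_apply, Prod.ext_iff, h1.1, h1.2.1, h1.2.2])
        rw [card_prod3_fun_fin] at hb
        have hμμ2 : μ' + μ + μ = μ' + 2*μ := by ring
        rw [hμμ2] at hb
        have hr1 : (0:ℝ) ≤ (if lam + nu = 0 then
            (Fintype.card (Om F d μ' μ) : ℝ) / (Fintype.card F : ℝ) ^ (2*μ) else 0) := by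
          positivity
        have hr2 : (0:ℝ) ≤ (if nu = 0 then
            (Fintype.card (Om F d μ' μ) : ℝ) / (Fintype.card F : ℝ) ^ (μ' + μ) else 0) := by
          positivity
        have hr3 : (0:ℝ) ≤ (if lam = 0 then
            (Fintype.card (Om F d μ' μ) : ℝ) / (Fintype.card F : ℝ) ^ (μ' + μ) else 0) := by
          positivity
        linarith

end rowcase
section rowsum
open Matrix Function Finset
variable {F : Type*} [Field F] [Fintype F] {d μ' μ : ℕ}

attribute [local instance 2000] Classical.propDecidable

lemma row_sum_bound (hμ : μ' ≤ μ) (hK : 2*d ≤ μ' + 2*μ) :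
    ∑ u ∈ Finset.univ.filter (fun u : (Fin d ⊕ Fin d) → F => u ≠ 0),
      ((Finset.univ.filter fun ω : Om F d μ' μ => u ᵥ* Mat ω = 0).card : ℝ)
    ≤ 4 * (Fintype.card (Om F d μ' μ) : ℝ) := by
  set q : ℝ := (Fintype.card F : ℝ) with hqdef
  set T : ℝ := (Fintype.card (Om F d μ' μ) : ℝ) with hTdef
  have hq : (1:ℝ) ≤ q := by
    rw [hqdef]; exact_mod_cast Fintype.card_pos
  have hT : (0:ℝ) ≤ T := by rw [hTdef]; positivity
  have step1 : ∑ u ∈ Finset.univ.filter (fun u : (Fin d ⊕ Fin d) → F => u ≠ 0),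
      ((Finset.univ.filter fun ω : Om F d μ' μ => u ᵥ* Mat ω = 0).card : ℝ)
      ≤ ∑ u ∈ Finset.univ.filter (fun u : (Fin d ⊕ Fin d) → F => u ≠ 0),
        (T / q ^ (μ' + 2*μ)
         + (if u ∘ Sum.inl + u ∘ Sum.inr = 0 then T / q ^ (2*μ) else 0)
         + (if u ∘ Sum.inr = 0 then T / q ^ (μ' + μ) else 0)
         + (if u ∘ Sum.inl = 0 then T / q ^ (μ' + μ) else 0)) :=
    Finset.sum_le_sum fun u hu => rowN u (Finset.mem_filter.mp hu).2
  refine le_trans step1 ?_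
  have e1 : ∑ u ∈ Finset.univ.filter (fun u : (Fin d ⊕ Fin d) → F => u ≠ 0),
      (T / q ^ (μ' + 2*μ)) ≤ T := by
    rw [Finset.sum_const, nsmul_eq_mul]
    calc ((Finset.univ.filter (fun u : (Fin d ⊕ Fin d) → F => u ≠ 0)).card : ℝ)
          * (T / q ^ (μ' + 2*μ))
        ≤ (Fintype.card ((Fin d ⊕ Fin d) → F) : ℝ) * (T / q ^ (μ' + 2*μ)) := by
          apply mul_le_mul_of_nonneg_right _ (by positivity)
          exact_mod_cast Finset.card_filter_le _ _
      _ = q ^ (2*d) * (T / q ^ (μ' + 2*μ)) := by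
          congr 1
          rw [hqdef]
          exact_mod_cast cardV_row d F
      _ ≤ T := pow_mul_div_le hq hT hK
  have e2 : ∑ u ∈ Finset.univ.filter (fun u : (Fin d ⊕ Fin d) → F => u ≠ 0),
      (if u ∘ Sum.inl + u ∘ Sum.inr = 0 then T / q ^ (2*μ) else 0) ≤ T := by
    refine le_trans (ite_sum_le _ _ (by positivity) _) ?_
    have hcard := card_filter_le_of_inj
      (fun u : (Fin d ⊕ Fin d) → F => u ∘ Sum.inl + u ∘ Sum.inr = 0)
      (fun u => u ∘ Sum.inl) (β := Fin d → F)
      (fun a b ha hb h => by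
        funext i
        rcases i with i | i
        · exact congrFun h i
        · have h1 : a (Sum.inr i) = - a (Sum.inl i) := by
            have := congrFun ha i
            simp only [Pi.add_apply, Pi.zero_apply, Function.comp_apply] at this
            exact (neg_eq_of_add_eq_zero_right this).symm
          have h2 : b (Sum.inr i) = - b (Sum.inl i) := by
            have := congrFun hb i
            simp only [Pi.add_apply, Pi.zero_apply, Function.comp_apply] at this
            exact (neg_eq_of_add_eq_zero_right this).symm
          have h3 : a (Sum.inl i) = b (Sum.inl i) := congrFun h i
          rw [h1, h2, h3])
    calc ((Finset.univ.filter (fun u : (Fin d ⊕ Fin d) → F =>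
            u ∘ Sum.inl + u ∘ Sum.inr = 0)).card : ℝ) * (T / q ^ (2*μ))
        ≤ (Fintype.card (Fin d → F) : ℝ) * (T / q ^ (2*μ)) := by
          apply mul_le_mul_of_nonneg_right _ (by positivity)
          exact_mod_cast hcard
      _ = q ^ d * (T / q ^ (2*μ)) := by rw [hqdef]; rw [Fintype.card_fun]; push_cast; simp
      _ ≤ T := pow_mul_div_le hq hT (arith_row1 hμ hK)
  have e3 : ∑ u ∈ Finset.univ.filter (fun u : (Fin d ⊕ Fin d) → F => u ≠ 0),
      (if u ∘ Sum.inr = 0 then T / q ^ (μ' + μ) else 0) ≤ T := by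
    refine le_trans (ite_sum_le _ _ (by positivity) _) ?_
    have hcard := card_filter_le_of_inj
      (fun u : (Fin d ⊕ Fin d) → F => u ∘ Sum.inr = 0)
      (fun u => u ∘ Sum.inl) (β := Fin d → F)
      (fun a b ha hb h => by
        funext i
        rcases i with i | i
        · exact congrFun h i
        · exact (congrFun ha i).trans (congrFun hb i).symm)
    calc ((Finset.univ.filter (fun u : (Fin d ⊕ Fin d) → F =>
            u ∘ Sum.inr = 0)).card : ℝ) * (T / q ^ (μ' + μ))
        ≤ (Fintype.card (Fin d → F) : ℝ) * (T / q ^ (μ' + μ)) := by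
          apply mul_le_mul_of_nonneg_right _ (by positivity)
          exact_mod_cast hcard
      _ = q ^ d * (T / q ^ (μ' + μ)) := by rw [hqdef]; rw [Fintype.card_fun]; push_cast; simp
      _ ≤ T := pow_mul_div_le hq hT (arith_row2 hK)
  have e4 : ∑ u ∈ Finset.univ.filter (fun u : (Fin d ⊕ Fin d) → F => u ≠ 0),
      (if u ∘ Sum.inl = 0 then T / q ^ (μ' + μ) else 0) ≤ T := by
    refine le_trans (ite_sum_le _ _ (by positivity) _) ?_
    have hcard := card_filter_le_of_inj
      (fun u : (Fin d ⊕ Fin d) → F => u ∘ Sum.inl = 0)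
      (fun u => u ∘ Sum.inr) (β := Fin d → F)
      (fun a b ha hb h => by
        funext i
        rcases i with i | i
        · exact (congrFun ha i).trans (congrFun hb i).symm
        · exact congrFun h i)
    calc ((Finset.univ.filter (fun u : (Fin d ⊕ Fin d) → F =>
            u ∘ Sum.inl = 0)).card : ℝ) * (T / q ^ (μ' + μ))
        ≤ (Fintype.card (Fin d → F) : ℝ) * (T / q ^ (μ' + μ)) := by
          apply mul_le_mul_of_nonneg_right _ (by positivity)
          exact_mod_cast hcard
      _ = q ^ d * (T / q ^ (μ' + μ)) := by rw [hqdef]; rw [Fintype.card_fun]; push_cast; simp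
      _ ≤ T := pow_mul_div_le hq hT (arith_row2 hK)
  simp only [Finset.sum_add_distrib]
  linarith

end rowsum
section master
open Matrix Function Finset
variable {F : Type*} [Field F] [Fintype F] {d μ' μ : ℕ}

attribute [local instance 2000] Classical.propDecidable

lemma col_bad (hμ : μ' ≤ μ) (hK : μ' + 2*μ ≤ 2*d) :
    ((Fintype.card F : ℝ) - 1) *
      ((Finset.univ.filter fun ω : Om F d μ' μ =>
        ∃ v : ((Fin μ' ⊕ Fin μ) ⊕ Fin μ) → F, v ≠ 0 ∧ Mat ω *ᵥ v = 0).card : ℝ)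
    ≤ 4 * (Fintype.card (Om F d μ' μ) : ℝ) := by
  have hdc := double_count (F := F)
    (cond := fun (ω : Om F d μ' μ) (v : ((Fin μ' ⊕ Fin μ) ⊕ Fin μ) → F) => Mat ω *ᵥ v = 0)
    (fun ω c v hc => by
      have hc' : Mat ω *ᵥ v = 0 := hc
      show Mat ω *ᵥ (c • v) = 0
      rw [Matrix.mulVec_smul, hc', smul_zero])
  have h1 : (1:ℕ) ≤ Fintype.card F := Fintype.card_pos
  have hcast : ((Fintype.card F : ℝ) - 1) *
      ((Finset.univ.filter fun ω : Om F d μ' μ =>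
        ∃ v : ((Fin μ' ⊕ Fin μ) ⊕ Fin μ) → F, v ≠ 0 ∧ Mat ω *ᵥ v = 0).card : ℝ)
      = (((Fintype.card F - 1) *
        (Finset.univ.filter fun ω : Om F d μ' μ =>
          ∃ v : ((Fin μ' ⊕ Fin μ) ⊕ Fin μ) → F, v ≠ 0 ∧ Mat ω *ᵥ v = 0).card : ℕ) : ℝ) := by
    push_cast [Nat.cast_sub h1]
    ring
  rw [hcast]
  calc (((Fintype.card F - 1) *
        (Finset.univ.filter fun ω : Om F d μ' μ =>
          ∃ v : ((Fin μ' ⊕ Fin μ) ⊕ Fin μ) → F, v ≠ 0 ∧ Mat ω *ᵥ v = 0).card : ℕ) : ℝ)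
      ≤ ((∑ v ∈ Finset.univ.filter (fun v : ((Fin μ' ⊕ Fin μ) ⊕ Fin μ) → F => v ≠ 0),
          (Finset.univ.filter fun ω : Om F d μ' μ => Mat ω *ᵥ v = 0).card : ℕ) : ℝ) := by
        exact_mod_cast hdc
    _ = ∑ v ∈ Finset.univ.filter (fun v : ((Fin μ' ⊕ Fin μ) ⊕ Fin μ) → F => v ≠ 0),
          ((Finset.univ.filter fun ω : Om F d μ' μ => Mat ω *ᵥ v = 0).card : ℝ) := by
        push_cast; rfl
    _ ≤ 4 * (Fintype.card (Om F d μ' μ) : ℝ) := col_sum_bound hμ hK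

lemma row_bad (hμ : μ' ≤ μ) (hK : 2*d ≤ μ' + 2*μ) :
    ((Fintype.card F : ℝ) - 1) *
      ((Finset.univ.filter fun ω : Om F d μ' μ =>
        ∃ u : (Fin d ⊕ Fin d) → F, u ≠ 0 ∧ u ᵥ* Mat ω = 0).card : ℝ)
    ≤ 4 * (Fintype.card (Om F d μ' μ) : ℝ) := by
  have hdc := double_count (F := F)
    (cond := fun (ω : Om F d μ' μ) (u : (Fin d ⊕ Fin d) → F) => u ᵥ* Mat ω = 0)
    (fun ω c u hc => by
      have hc' : u ᵥ* Mat ω = 0 := hc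
      show (c • u) ᵥ* Mat ω = 0
      rw [Matrix.smul_vecMul, hc', smul_zero])
  have h1 : (1:ℕ) ≤ Fintype.card F := Fintype.card_pos
  have hcast : ((Fintype.card F : ℝ) - 1) *
      ((Finset.univ.filter fun ω : Om F d μ' μ =>
        ∃ u : (Fin d ⊕ Fin d) → F, u ≠ 0 ∧ u ᵥ* Mat ω = 0).card : ℝ)
      = (((Fintype.card F - 1) *
        (Finset.univ.filter fun ω : Om F d μ' μ =>
          ∃ u : (Fin d ⊕ Fin d) → F, u ≠ 0 ∧ u ᵥ* Mat ω = 0).card : ℕ) : ℝ) := by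
    push_cast [Nat.cast_sub h1]
    ring
  rw [hcast]
  calc (((Fintype.card F - 1) *
        (Finset.univ.filter fun ω : Om F d μ' μ =>
          ∃ u : (Fin d ⊕ Fin d) → F, u ≠ 0 ∧ u ᵥ* Mat ω = 0).card : ℕ) : ℝ)
      ≤ ((∑ u ∈ Finset.univ.filter (fun u : (Fin d ⊕ Fin d) → F => u ≠ 0),
          (Finset.univ.filter fun ω : Om F d μ' μ => u ᵥ* Mat ω = 0).card : ℕ) : ℝ) := by
        exact_mod_cast hdc
    _ = ∑ u ∈ Finset.univ.filter (fun u : (Fin d ⊕ Fin d) → F => u ≠ 0),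
          ((Finset.univ.filter fun ω : Om F d μ' μ => u ᵥ* Mat ω = 0).card : ℝ) := by
        push_cast; rfl
    _ ≤ 4 * (Fintype.card (Om F d μ' μ) : ℝ) := row_sum_bound hμ hK

lemma master (hμ : μ' ≤ μ) :
    1 - 4 / ((Fintype.card F : ℝ) - 1) ≤
      (Nat.card {ω : Om F d μ' μ // (Mat ω).rank = min (2*d) (μ' + 2*μ)} : ℝ)
        / (Nat.card (Om F d μ' μ) : ℝ) := by
  have hm : Fintype.card (Fin d ⊕ Fin d) = 2*d := by
    simp [two_mul]
  have hn : Fintype.card ((Fin μ' ⊕ Fin μ) ⊕ Fin μ) = μ' + 2*μ := by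
    simp only [Fintype.card_sum, Fintype.card_fin]; ring
  have hq1 : (1:ℝ) < (Fintype.card F : ℝ) := by exact_mod_cast Fintype.one_lt_card
  have hq1' : (0:ℝ) < (Fintype.card F : ℝ) - 1 := by linarith
  set T' : ℕ := Fintype.card (Om F d μ' μ) with hT'def
  have hTpos : 0 < T' := Fintype.card_pos
  have hT : (0:ℝ) < (T' : ℝ) := by exact_mod_cast hTpos
  -- characterize good set and bound bad count in both cases
  obtain hK | hK := le_total (μ' + 2*μ) (2*d)
  · -- column case
    have hchar : ∀ ω : Om F d μ' μ, ((Mat ω).rank = min (2*d) (μ' + 2*μ) ↔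
        ¬ ∃ v : ((Fin μ' ⊕ Fin μ) ⊕ Fin μ) → F, v ≠ 0 ∧ Mat ω *ᵥ v = 0) := by
      intro ω
      rw [← hm, ← hn, rank_char_col (Mat ω) (by rw [hm, hn]; exact hK)]
      constructor
      · rintro h ⟨v, hv, hmv⟩; exact hv (h v hmv)
      · intro h v hmv
        by_contra hv
        exact h ⟨v, hv, hmv⟩
    have hgood : Nat.card {ω : Om F d μ' μ // (Mat ω).rank = min (2*d) (μ' + 2*μ)}
        = T' - (Finset.univ.filter fun ω : Om F d μ' μ =>
            ∃ v : ((Fin μ' ⊕ Fin μ) ⊕ Fin μ) → F, v ≠ 0 ∧ Mat ω *ᵥ v = 0).card := by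
      rw [Nat.card_eq_fintype_card, Fintype.card_subtype]
      rw [Finset.filter_congr (fun ω _ => by rw [hchar ω])]
      have hsplit := Finset.card_filter_add_card_filter_not
        (s := (Finset.univ : Finset (Om F d μ' μ)))
        (p := fun ω : Om F d μ' μ =>
          ∃ v : ((Fin μ' ⊕ Fin μ) ⊕ Fin μ) → F, v ≠ 0 ∧ Mat ω *ᵥ v = 0)
      rw [Finset.card_univ, ← hT'def] at hsplit
      exact (Nat.sub_eq_of_eq_add (by rw [← hsplit]; ring)).symm
    set B : ℕ := (Finset.univ.filter fun ω : Om F d μ' μ =>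
        ∃ v : ((Fin μ' ⊕ Fin μ) ⊕ Fin μ) → F, v ≠ 0 ∧ Mat ω *ᵥ v = 0).card with hBdef
    have hBT : B ≤ T' := by rw [hT'def, ← Finset.card_univ]; exact Finset.card_filter_le _ _
    have hbad : ((Fintype.card F : ℝ) - 1) * (B : ℝ) ≤ 4 * (T' : ℝ) := col_bad hμ hK
    rw [hgood, Nat.card_eq_fintype_card, ← hT'def]
    rw [Nat.cast_sub hBT]
    rw [sub_div, div_self hT.ne']
    have hBdiv : (B : ℝ) / (T' : ℝ) ≤ 4 / ((Fintype.card F : ℝ) - 1) := by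
      rw [div_le_div_iff₀ hT hq1']
      linarith
    linarith
  · -- row case
    have hchar : ∀ ω : Om F d μ' μ, ((Mat ω).rank = min (2*d) (μ' + 2*μ) ↔
        ¬ ∃ u : (Fin d ⊕ Fin d) → F, u ≠ 0 ∧ u ᵥ* Mat ω = 0) := by
      intro ω
      rw [← hm, ← hn, rank_char_row (Mat ω) (by rw [hm, hn]; exact hK)]
      constructor
      · rintro h ⟨u, hu, hmu⟩; exact hu (h u hmu)
      · intro h u hmu
        by_contra hu
        exact h ⟨u, hu, hmu⟩
    have hgood : Nat.card {ω : Om F d μ' μ // (Mat ω).rank = min (2*d) (μ' + 2*μ)}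
        = T' - (Finset.univ.filter fun ω : Om F d μ' μ =>
            ∃ u : (Fin d ⊕ Fin d) → F, u ≠ 0 ∧ u ᵥ* Mat ω = 0).card := by
      rw [Nat.card_eq_fintype_card, Fintype.card_subtype]
      rw [Finset.filter_congr (fun ω _ => by rw [hchar ω])]
      have hsplit := Finset.card_filter_add_card_filter_not
        (s := (Finset.univ : Finset (Om F d μ' μ)))
        (p := fun ω : Om F d μ' μ =>
          ∃ u : (Fin d ⊕ Fin d) → F, u ≠ 0 ∧ u ᵥ* Mat ω = 0)
      rw [Finset.card_univ, ← hT'def] at hsplit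
      exact (Nat.sub_eq_of_eq_add (by rw [← hsplit]; ring)).symm
    set B : ℕ := (Finset.univ.filter fun ω : Om F d μ' μ =>
        ∃ u : (Fin d ⊕ Fin d) → F, u ≠ 0 ∧ u ᵥ* Mat ω = 0).card with hBdef
    have hBT : B ≤ T' := by rw [hT'def, ← Finset.card_univ]; exact Finset.card_filter_le _ _
    have hbad : ((Fintype.card F : ℝ) - 1) * (B : ℝ) ≤ 4 * (T' : ℝ) := row_bad hμ hK
    rw [hgood, Nat.card_eq_fintype_card, ← hT'def]
    rw [Nat.cast_sub hBT]
    rw [sub_div, div_self hT.ne']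
    have hBdiv : (B : ℝ) / (T' : ℝ) ≤ 4 / ((Fintype.card F : ℝ) - 1) := by
      rw [div_le_div_iff₀ hT hq1']
      linarith
    linarith

lemma ratio_le_one :
    (Nat.card {ω : Om F d μ' μ // (Mat ω).rank = min (2*d) (μ' + 2*μ)} : ℝ)
        / (Nat.card (Om F d μ' μ) : ℝ) ≤ 1 := by
  have hT : (0:ℝ) < (Nat.card (Om F d μ' μ) : ℝ) := by
    rw [Nat.card_eq_fintype_card]
    exact_mod_cast Fintype.card_pos
  rw [div_le_one hT]
  have := Fintype.card_subtype_le (fun ω : Om F d μ' μ => (Mat ω).rank = min (2*d) (μ' + 2*μ))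
  rw [Nat.card_eq_fintype_card, Nat.card_eq_fintype_card]
  exact_mod_cast this

end master
open Matrix Filter

/-- For i.i.d. uniform `A ∈ F^{d×μ'}`, `B, C ∈ F^{d×μ}` over `F_{p^n}` with `μ' ≤ μ`, the
block matrix `[[A, B, 0], [A, 0, C]]` has rank `min{2d, μ'+2μ}` with probability tending
to `1` as `n → ∞`. -/
theorem stmt2 (p : ℕ) [Fact p.Prime] (d μ' μ : ℕ) (hμ : μ' ≤ μ) :
    Tendsto (fun n : ℕ =>
      (Nat.card {ABC : Matrix (Fin d) (Fin μ') (GaloisField p n) ×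
          Matrix (Fin d) (Fin μ) (GaloisField p n) × Matrix (Fin d) (Fin μ) (GaloisField p n) //
          (Matrix.fromBlocks (Matrix.fromCols ABC.1 ABC.2.1) 0
              (Matrix.fromCols ABC.1 0) ABC.2.2).rank = min (2 * d) (μ' + 2 * μ)} : ℝ) /
        (Nat.card (Matrix (Fin d) (Fin μ') (GaloisField p n) ×
          Matrix (Fin d) (Fin μ) (GaloisField p n) ×
          Matrix (Fin d) (Fin μ) (GaloisField p n)) : ℝ))
      atTop (nhds 1) := by
  have hp : 1 < p := (Fact.out : p.Prime).one_lt
  have hpR : (1:ℝ) < (p:ℝ) := by exact_mod_cast hp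
  have h1 : Tendsto (fun n : ℕ => (p:ℝ)^n) atTop atTop :=
    tendsto_pow_atTop_atTop_of_one_lt hpR
  have h2 : Tendsto (fun n : ℕ => (p:ℝ)^n - 1) atTop atTop := by
    simpa [sub_eq_add_neg] using tendsto_atTop_add_const_right atTop (-1 : ℝ) h1
  have h3 : Tendsto (fun n : ℕ => 4 / ((p:ℝ)^n - 1)) atTop (nhds 0) :=
    Tendsto.div_atTop tendsto_const_nhds h2
  have hg : Tendsto (fun n : ℕ => 1 - 4 / ((p:ℝ)^n - 1)) atTop (nhds 1) := by
    have := (tendsto_const_nhds (x := (1:ℝ)) (f := atTop)).sub h3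
    simpa using this
  refine tendsto_of_tendsto_of_tendsto_of_le_of_le' hg tendsto_const_nhds ?_ ?_
  · -- lower bound, eventually
    filter_upwards [eventually_ge_atTop 1] with n hn
    letI : Fintype (GaloisField p n) := Fintype.ofFinite _
    have hmaster := master (F := GaloisField p n) (d := d) (μ' := μ') (μ := μ) hμ
    have hcard : (Fintype.card (GaloisField p n) : ℝ) = (p:ℝ)^n := by
      have hc := GaloisField.card p n (by omega : n ≠ 0)
      rw [Nat.card_eq_fintype_card] at hc
      exact_mod_cast hc
    rw [hcard] at hmaster
    refine le_trans hmaster (le_of_eq ?_)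
    have hnum : Nat.card {ω : Om (GaloisField p n) d μ' μ //
          (Mat ω).rank = min (2*d) (μ' + 2*μ)}
        = Nat.card {ABC : Matrix (Fin d) (Fin μ') (GaloisField p n) ×
          Matrix (Fin d) (Fin μ) (GaloisField p n) × Matrix (Fin d) (Fin μ) (GaloisField p n) //
          (Matrix.fromBlocks (Matrix.fromCols ABC.1 ABC.2.1) 0
              (Matrix.fromCols ABC.1 0) ABC.2.2).rank = min (2 * d) (μ' + 2 * μ)} :=
      Nat.card_congr (Equiv.subtypeEquivRight fun ω => Iff.rfl)
    rw [hnum]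
  · -- upper bound
    filter_upwards with n
    letI : Fintype (GaloisField p n) := Fintype.ofFinite _
    have hone := ratio_le_one (F := GaloisField p n) (d := d) (μ' := μ') (μ := μ)
    refine le_trans (le_of_eq ?_) hone
    have hnum : Nat.card {ω : Om (GaloisField p n) d μ' μ //
          (Mat ω).rank = min (2*d) (μ' + 2*μ)}
        = Nat.card {ABC : Matrix (Fin d) (Fin μ') (GaloisField p n) ×
          Matrix (Fin d) (Fin μ) (GaloisField p n) × Matrix (Fin d) (Fin μ) (GaloisField p n) //
          (Matrix.fromBlocks (Matrix.fromCols ABC.1 ABC.2.1) 0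
              (Matrix.fromCols ABC.1 0) ABC.2.2).rank = min (2 * d) (μ' + 2 * μ)} :=
      Nat.card_congr (Equiv.subtypeEquivRight fun ω => Iff.rfl)
    rw [hnum]
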